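/- Fix ν > 0. Let p₁₂ ≥ 0, p₂₂ > p₁₂², κ ≥ 0, and suppose that for some γ₀ > 0 the matrix Q_{γ₀} P + P Q_{γ₀}ᵀ − 2κ P is positive semi-definite, where Q_γ = [[0,1],[−γ,ν]] and P = [[1,p₁₂],[p₁₂,p₂₂]], and additionally p₁₂ ≥ κ. Then κ ≤ ν/2. -/

import Mathlib

open Matrix

/-- admissibility of `(p₁₂,p₂₂)` for some `γ₀ > 0` forces `κ ≤ ν/2`. -/
theorem stmt7 (ν κ p12 p22 γ₀ : ℝ) (hν : 0 < ν)
    (hp12 : 0 ≤ p12) (hP : p12 ^ 2 < p22) (hκ : 0 ≤ κ) (hκp : κ ≤ p12)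
    (hγ₀ : 0 < γ₀)
    (hpsd : ((!![0, 1; -γ₀, ν] : Matrix (Fin 2) (Fin 2) ℝ) * !![1, p12; p12, p22]
        + !![1, p12; p12, p22] * (!![0, 1; -γ₀, ν] : Matrix (Fin 2) (Fin 2) ℝ)ᵀ
        - (2 * κ) • !![1, p12; p12, p22]).PosSemidef) :
    κ ≤ ν / 2 := by
  have hM : ((!![0, 1; -γ₀, ν] : Matrix (Fin 2) (Fin 2) ℝ) * !![1, p12; p12, p22]
        + !![1, p12; p12, p22] * (!![0, 1; -γ₀, ν] : Matrix (Fin 2) (Fin 2) ℝ)ᵀ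
        - (2 * κ) • !![1, p12; p12, p22])
      = !![2*(p12 - κ), p22 - γ₀ + ν*p12 - 2*κ*p12;
           p22 - γ₀ + ν*p12 - 2*κ*p12, 2*(ν*p22 - γ₀*p12 - κ*p22)] := by
    ext i j
    fin_cases i <;> fin_cases j <;>
      simp [Matrix.mul_apply, Fin.sum_univ_two, Matrix.vecHead, Matrix.vecTail, Matrix.vecMul, dotProduct] <;> ring
  rw [hM] at hpsd
  have hA := hpsd.dotProduct_mulVec_nonneg ![1, 0]
  have hB := hpsd.dotProduct_mulVec_nonneg ![p12, -1]
  simp [dotProduct, Matrix.mulVec, Fin.sum_univ_two, Matrix.vecHead,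
    Matrix.vecTail] at hA hB
  nlinarith [mul_nonneg (sub_nonneg.2 hA) (sub_nonneg.2 hP.le)]
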